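/- Let C be a finite connected subgraph of Z^2 and let e = {(x,y),(x+1,y)} ∈ ∂C be a horizontal boundary edge such that either {(x-1,y),(x,y)} ∈ E(C) or {(x,y),(x,y+1)} ∈ E(C). Then ∂(C+e) \ ∂C is contained in the set { {(x+1,y),(x+2,y)}, {(x+1,y),(x+1,y-1)}, {(x+1,y),(x+1,y+1)} }; in particular at most 3 new boundary edges are created by adding e. -/

import Mathlib

open SimpleGraph

/-- The square lattice `ℤ²`. -/
def Grid : SimpleGraph (ℤ × ℤ) where
  Adj u v := |u.1 - v.1| + |u.2 - v.2| = 1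
  symm := ⟨by intro u v h; simpa [abs_sub_comm] using h⟩
  loopless := ⟨by intro u h; simp at h⟩

/-- The edge boundary of a subgraph `H` of `ℤ²`: edges of the lattice not in `H`
but incident to a vertex of `H`. -/
def edgeBoundary (H : Grid.Subgraph) : Set (Sym2 (ℤ × ℤ)) :=
  {e | e ∈ Grid.edgeSet ∧ e ∉ H.edgeSet ∧ ∃ v ∈ H.verts, v ∈ e}

lemma grid_adj_cases {u v : ℤ × ℤ} (h : Grid.Adj u v) :
    v = (u.1 + 1, u.2) ∨ v = (u.1 - 1, u.2) ∨ v = (u.1, u.2 + 1) ∨ v = (u.1, u.2 - 1) := by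
  obtain ⟨a, b⟩ := v
  simp only [Grid] at h
  simp only [Prod.mk.injEq]
  rcases abs_cases (u.1 - a) with ⟨h1, _⟩ | ⟨h1, _⟩ <;>
    rcases abs_cases (u.2 - b) with ⟨h2, _⟩ | ⟨h2, _⟩ <;> omega

/-- When Maker adds a horizontal boundary edge `{(x,y),(x+1,y)}` to her connected
component `C`, where `{(x-1,y),(x,y)} ∈ E(C)` or `{(x,y),(x,y+1)} ∈ E(C)`, the new
boundary edges are among the three edges at the vertex `(x+1,y)` away from `C`. -/
theorem new_boundary_edges_subset (C : Grid.Subgraph) (hconn : C.Connected)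
    (hfin : C.verts.Finite) (x y : ℤ) (h : Grid.Adj (x, y) (x + 1, y))
    (he : s((x, y), (x + 1, y)) ∈ edgeBoundary C)
    (hprev : s((x - 1, y), (x, y)) ∈ C.edgeSet ∨ s((x, y), (x, y + 1)) ∈ C.edgeSet) :
    edgeBoundary (C ⊔ Grid.subgraphOfAdj h) \ edgeBoundary C ⊆
      {s((x + 1, y), (x + 2, y)), s((x + 1, y), (x + 1, y - 1)),
        s((x + 1, y), (x + 1, y + 1))} := by
  intro f hf
  obtain ⟨⟨hfg, hfne, v, hv, hvf⟩, hfnb⟩ := hf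
  have hfnC : f ∉ C.edgeSet := fun hc =>
    hfne (Subgraph.edgeSet_mono le_sup_left hc)
  -- (x,y) is a vertex of C
  have hxy : (x, y) ∈ C.verts := by
    rcases hprev with hp | hp
    · rw [Subgraph.mem_edgeSet] at hp; exact hp.snd_mem
    · rw [Subgraph.mem_edgeSet] at hp; exact hp.fst_mem
  -- no vertex of f is in C
  have hnov : ∀ w ∈ C.verts, w ∉ f := by
    intro w hw hwf
    exact hfnb ⟨hfg, hfnC, w, hw, hwf⟩
  -- the witness vertex must be (x+1,y)
  have hv' : v = (x + 1, y) := by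
    simp only [Subgraph.verts_sup, subgraphOfAdj_verts, Set.mem_union,
      Set.mem_insert_iff, Set.mem_singleton_iff] at hv
    rcases hv with hv | hv | hv
    · exact absurd hvf (hnov v hv)
    · subst hv; exact absurd hvf (hnov _ hxy)
    · exact hv
  subst hv'
  -- now analyze f
  induction f using Sym2.ind with
  | _ a b =>
    rw [Sym2.mem_iff] at hvf
    rw [mem_edgeSet] at hfg
    have key : ∀ (c : ℤ × ℤ), Grid.Adj (x + 1, y) c → s((x + 1, y), c) ∉ (C ⊔ Grid.subgraphOfAdj h).edgeSet →
        s((x + 1, y), c) ∈ ({s((x + 1, y), (x + 2, y)), s((x + 1, y), (x + 1, y - 1)),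
          s((x + 1, y), (x + 1, y + 1))} : Set (Sym2 (ℤ × ℤ))) := by
      intro c hc hne
      rcases grid_adj_cases hc with rfl | rfl | rfl | rfl
      · left; norm_num [add_assoc]
      · exfalso
        apply hne
        rw [Subgraph.mem_edgeSet]
        refine Or.inr ?_
        simp [Sym2.eq_swap]
      · right; right; rfl
      · right; left; rfl
    rcases hvf with rfl | rfl
    · exact key b hfg hfne
    · have : s(a, (x+1,y)) = s((x+1,y), a) := Sym2.eq_swap
      rw [this] at hfne ⊢
      exact key a hfg.symm hfne
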